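/- Let n be a positive integer with n ≡ 0 (mod 8) and let S_n ⊆ (ℤ/2)^n be the code spanned by the vectors e_0, …, e_{n/2−1}. Then every codeword of S_n has Hamming weight divisible by 4, i.e. S_n is a doubly even self-dual (type II) code. -/

import Mathlib

open Finset

/-- The Hamming weight of a binary word: the number of nonzero entries. -/
def wt {n : ℕ} (c : Fin n → ZMod 2) : ℕ := (Finset.univ.filter fun i => c i ≠ 0).card

/-- The generating vectors `e_0, …, e_{n/2−1}` of the code `S_n` (coordinates indexed by
`j = 0, …, n−1`):  `(e_0)_j = 1` if `j = 0` or `j = n−2`, `(e_0)_j = 0` if `j = 1` or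
`j = n−1`, and `(e_0)_j = j mod 2` otherwise; `(e_1)_j = j mod 2`; and for `k ≥ 2`,
`(e_k)_j = 1` iff `j ∈ {2k−2, 2k−1, n−2, n−1}`. -/
def eVec (n : ℕ) (k : ℕ) : Fin n → ZMod 2 := fun j =>
  if k = 0 then
    if j.val = 0 ∨ j.val = n - 2 then 1
    else if j.val = 1 ∨ j.val = n - 1 then 0
    else (j.val : ZMod 2)
  else if k = 1 then (j.val : ZMod 2)
  else if j.val = 2 * k - 2 ∨ j.val = 2 * k - 1 ∨ j.val = n - 2 ∨ j.val = n - 1 then 1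
  else 0

/-- The code `S_n ⊆ (ℤ/2)^n` spanned by `e_0, …, e_{n/2−1}`. -/
def Scode (n : ℕ) : Submodule (ZMod 2) (Fin n → ZMod 2) :=
  Submodule.span (ZMod 2) (eVec n '' Set.Iio (n / 2))

/-! ### Auxiliary lemmas -/

lemma zmod2_cases (x : ZMod 2) : x = 0 ∨ x = 1 := by revert x; decide

lemma wt_add_eq {n : ℕ} (a b : Fin n → ZMod 2) :
    wt (a + b) + 2 * (univ.filter fun j => a j ≠ 0 ∧ b j ≠ 0).card = wt a + wt b := by
  classical
  simp only [wt, Finset.card_filter]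
  rw [Finset.mul_sum, ← Finset.sum_add_distrib, ← Finset.sum_add_distrib]
  refine Finset.sum_congr rfl fun j _ => ?_
  rcases zmod2_cases (a j) with h | h <;> rcases zmod2_cases (b j) with h' | h' <;>
    rw [Pi.add_apply, h, h'] <;> decide

lemma dot_eq_card {n : ℕ} (a b : Fin n → ZMod 2) :
    ∑ j, a j * b j = ((univ.filter fun j => a j ≠ 0 ∧ b j ≠ 0).card : ZMod 2) := by
  classical
  rw [Finset.card_filter, Nat.cast_sum]
  refine Finset.sum_congr rfl fun j _ => ?_
  rcases zmod2_cases (a j) with h | h <;> rcases zmod2_cases (b j) with h' | h' <;>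
    rw [h, h'] <;> decide

lemma dot_self {n : ℕ} (a : Fin n → ZMod 2) : ∑ j, a j * a j = (wt a : ZMod 2) := by
  rw [dot_eq_card, wt]
  congr 2
  simp

lemma dot_comm {n : ℕ} (a b : Fin n → ZMod 2) : ∑ j, a j * b j = ∑ j, b j * a j :=
  Finset.sum_congr rfl fun j _ => mul_comm _ _

lemma cast2_zero {a : ℕ} (h : a % 2 = 0) : (a : ZMod 2) = 0 := by
  rw [ZMod.natCast_eq_zero_iff]; omega

lemma cast2_one {a : ℕ} (h : a % 2 = 1) : (a : ZMod 2) = 1 := by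
  have ha : a = 2 * (a / 2) + 1 := by omega
  rw [ha]; push_cast
  rw [show ((2 : ZMod 2)) = 0 by decide]; ring

lemma cast2_ne_zero_iff (a : ℕ) : ((a : ZMod 2) ≠ 0) ↔ a % 2 = 1 := by
  constructor
  · intro h
    by_contra h'
    exact h (cast2_zero (by omega))
  · intro h
    rw [cast2_one h]
    exact one_ne_zero

/-- The 4-point indicator vector. -/
def ind4 {n : ℕ} (i1 i2 i3 i4 : Fin n) : Fin n → ZMod 2 :=
  fun j => if j = i1 ∨ j = i2 ∨ j = i3 ∨ j = i4 then 1 else 0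

lemma wt_ind4 {n : ℕ} {i1 i2 i3 i4 : Fin n} (h12 : i1 ≠ i2) (h13 : i1 ≠ i3) (h14 : i1 ≠ i4)
    (h23 : i2 ≠ i3) (h24 : i2 ≠ i4) (h34 : i3 ≠ i4) : wt (ind4 i1 i2 i3 i4) = 4 := by
  classical
  have hf : (univ.filter fun j => ind4 i1 i2 i3 i4 j ≠ 0)
      = ({i1, i2, i3, i4} : Finset (Fin n)) := by
    ext j
    simp only [mem_filter, mem_univ, true_and, mem_insert, mem_singleton]
    simp only [ind4]
    split_ifs with h
    · simpa using h
    · simpa using h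
  rw [wt, hf, Finset.card_insert_of_notMem (by simp [h12, h13, h14]),
    Finset.card_insert_of_notMem (by simp [h23, h24]),
    Finset.card_insert_of_notMem (by simp [h34]), Finset.card_singleton]

lemma dot_ind4 {n : ℕ} {i1 i2 i3 i4 : Fin n} (h12 : i1 ≠ i2) (h13 : i1 ≠ i3) (h14 : i1 ≠ i4)
    (h23 : i2 ≠ i3) (h24 : i2 ≠ i4) (h34 : i3 ≠ i4) (c : Fin n → ZMod 2) :
    ∑ j, ind4 i1 i2 i3 i4 j * c j = c i1 + c i2 + c i3 + c i4 := by
  classical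
  have key : ∀ j, ind4 i1 i2 i3 i4 j * c j
      = if j ∈ ({i1, i2, i3, i4} : Finset (Fin n)) then c j else 0 := by
    intro j
    simp only [ind4, mem_insert, mem_singleton]
    split_ifs <;> simp
  simp_rw [key]
  rw [Finset.sum_ite_mem, Finset.univ_inter,
    Finset.sum_insert (by simp [h12, h13, h14]),
    Finset.sum_insert (by simp [h23, h24]),
    Finset.sum_insert (by simp [h34]), Finset.sum_singleton]
  ring

lemma ind4_apply {n : ℕ} (i1 i2 i3 i4 j : Fin n) :
    ind4 i1 i2 i3 i4 j = if j = i1 ∨ j = i2 ∨ j = i3 ∨ j = i4 then 1 else 0 := rfl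

/-! ### Structure of the generators -/

lemma eVec_one_apply {n : ℕ} (j : Fin n) : eVec n 1 j = (j.val : ZMod 2) := by
  simp [eVec]

lemma eVec_eq_ind4 {n k : ℕ} (hn8 : 8 ≤ n) (h2 : 2 ∣ n) (h2k : 2 ≤ k) (hk : k < n / 2) :
    eVec n k = ind4 ⟨2 * k - 2, by omega⟩ ⟨2 * k - 1, by omega⟩ ⟨n - 2, by omega⟩
      ⟨n - 1, by omega⟩ := by
  funext j
  have h0 : k ≠ 0 := by omega
  have h1 : k ≠ 1 := by omega
  simp only [eVec, if_neg h0, if_neg h1, ind4, Fin.ext_iff]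

lemma eVec_zero_eq {n : ℕ} (hn8 : 8 ≤ n) (h2 : 2 ∣ n) :
    eVec n 0 = eVec n 1 + ind4 ⟨0, by omega⟩ ⟨1, by omega⟩ ⟨n - 2, by omega⟩
      ⟨n - 1, by omega⟩ := by
  funext j
  have hj := j.isLt
  have cn2 : ((n - 2 : ℕ) : ZMod 2) = 0 := cast2_zero (by omega)
  have cn1 : ((n - 1 : ℕ) : ZMod 2) = 1 := cast2_one (by omega)
  simp only [eVec, if_pos rfl, Pi.add_apply, ind4, Fin.ext_iff,
    show (1 : ℕ) ≠ 0 by omega, if_neg, if_pos, ite_true, ite_false, one_ne_zero]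
  by_cases h0 : j.val = 0
  · rw [if_pos (Or.inl h0), if_pos (by omega), h0]
    decide
  by_cases h1 : j.val = 1
  · rw [if_neg (by omega), if_pos (Or.inl h1), if_pos (by omega), h1]
    decide
  by_cases h2' : j.val = n - 2
  · rw [if_pos (Or.inr h2'), if_pos (by omega), h2', cn2]
    decide
  by_cases h3 : j.val = n - 1
  · rw [if_neg (by omega), if_pos (Or.inr h3), if_pos (by omega), h3, cn1]
    decide
  · rw [if_neg (by omega), if_neg (by omega), if_neg (by omega), add_zero]

lemma sum_range_parity (m : ℕ) :
    (∑ j ∈ Finset.range (2 * m), if j % 2 = 1 then 1 else 0) = m := by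
  induction m with
  | zero => simp
  | succ m ih =>
    rw [show 2 * (m + 1) = (2 * m + 1) + 1 by ring, Finset.sum_range_succ,
      Finset.sum_range_succ, ih, if_neg (by omega), if_pos (by omega)]

lemma wt_e1 {n : ℕ} (h2 : 2 ∣ n) : wt (eVec n 1) = n / 2 := by
  classical
  rw [wt, Finset.card_filter]
  calc (∑ j : Fin n, if eVec n 1 j ≠ 0 then 1 else 0)
      = ∑ j : Fin n, if j.val % 2 = 1 then 1 else 0 := by
        refine Finset.sum_congr rfl fun j _ => ?_
        rw [eVec_one_apply j]
        by_cases h : j.val % 2 = 1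
        · rw [if_pos ((cast2_ne_zero_iff _).2 h), if_pos h]
        · rw [if_neg (by simp [cast2_ne_zero_iff, h]), if_neg h]
    _ = ∑ j ∈ Finset.range n, if j % 2 = 1 then 1 else 0 :=
        Fin.sum_univ_eq_sum_range (fun j => if j % 2 = 1 then 1 else 0) n
    _ = n / 2 := by
        rw [show n = 2 * (n / 2) by omega, sum_range_parity]
        omega

/-! ### Dot products of generators -/

section Dots

variable {n : ℕ} (hn8 : 8 ≤ n) (h2 : 2 ∣ n)

/-- Dot product of `e_1` with a 4-point vector `{2k-2, 2k-1, n-2, n-1}` is zero. -/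
lemma dot_e1_W {k : ℕ} (h1k : 1 ≤ k) (hk : k < n / 2) :
    ∑ j, eVec n 1 j *
      ind4 (⟨2 * k - 2, by omega⟩ : Fin n) ⟨2 * k - 1, by omega⟩ ⟨n - 2, by omega⟩
        ⟨n - 1, by omega⟩ j = 0 := by
  rw [dot_comm, dot_ind4 (by simp [Fin.ext_iff]; omega) (by simp [Fin.ext_iff]; omega)
    (by simp [Fin.ext_iff]; omega) (by simp [Fin.ext_iff]; omega)
    (by simp [Fin.ext_iff]; omega) (by simp [Fin.ext_iff]; omega)]
  simp only [eVec_one_apply]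
  rw [cast2_zero (a := 2 * k - 2) (by omega), cast2_one (a := 2 * k - 1) (by omega),
    cast2_zero (a := n - 2) (by omega), cast2_one (a := n - 1) (by omega)]
  decide

/-- Dot product of two distinct 4-point vectors is zero. -/
lemma dot_W_W {k l : ℕ} (h1k : 1 ≤ k) (hk : k < n / 2) (h1l : 1 ≤ l) (hl : l < n / 2)
    (hkl : k ≠ l) :
    ∑ j, ind4 (⟨2 * k - 2, by omega⟩ : Fin n) ⟨2 * k - 1, by omega⟩ ⟨n - 2, by omega⟩
        ⟨n - 1, by omega⟩ j *
      ind4 (⟨2 * l - 2, by omega⟩ : Fin n) ⟨2 * l - 1, by omega⟩ ⟨n - 2, by omega⟩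
        ⟨n - 1, by omega⟩ j = 0 := by
  rw [dot_ind4 (by simp [Fin.ext_iff]; omega) (by simp [Fin.ext_iff]; omega)
    (by simp [Fin.ext_iff]; omega) (by simp [Fin.ext_iff]; omega)
    (by simp [Fin.ext_iff]; omega) (by simp [Fin.ext_iff]; omega)]
  rw [ind4_apply, if_neg (by simp [Fin.ext_iff]; omega),
    ind4_apply, if_neg (by simp [Fin.ext_iff]; omega),
    ind4_apply, if_pos (by simp [Fin.ext_iff]),
    ind4_apply, if_pos (by simp [Fin.ext_iff])]
  decide

lemma dot_W_self {k : ℕ} (h1k : 1 ≤ k) (hk : k < n / 2) :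
    ∑ j, ind4 (⟨2 * k - 2, by omega⟩ : Fin n) ⟨2 * k - 1, by omega⟩ ⟨n - 2, by omega⟩
        ⟨n - 1, by omega⟩ j *
      ind4 (⟨2 * k - 2, by omega⟩ : Fin n) ⟨2 * k - 1, by omega⟩ ⟨n - 2, by omega⟩
        ⟨n - 1, by omega⟩ j = 0 := by
  rw [dot_self, wt_ind4 (by simp [Fin.ext_iff]; omega) (by simp [Fin.ext_iff]; omega)
    (by simp [Fin.ext_iff]; omega) (by simp [Fin.ext_iff]; omega)
    (by simp [Fin.ext_iff]; omega) (by simp [Fin.ext_iff]; omega)]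
  decide

end Dots
lemma eVec_pivot {n k l : ℕ} (hn8 : 8 ≤ n) (h2 : 2 ∣ n) (hk : k < n / 2) (hl : l < n / 2)
    (p : Fin n) (hp : p.val = if k = 0 then 0 else if k = 1 then 1 else 2 * k - 2) :
    eVec n l p = if l = k then 1 else 0 := by
  by_cases l0 : l = 0
  · subst l0
    rw [eVec_zero_eq hn8 h2, Pi.add_apply, eVec_one_apply, ind4_apply]
    by_cases k0 : k = 0
    · subst k0
      rw [if_pos rfl] at hp
      rw [if_pos (Or.inl (by simp [Fin.ext_iff, hp])), if_pos rfl, cast2_zero (by omega)]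
      decide
    by_cases k1 : k = 1
    · subst k1
      rw [if_neg (by omega), if_pos rfl] at hp
      rw [if_pos (Or.inr (Or.inl (by simp [Fin.ext_iff, hp]))), if_neg (by omega),
        cast2_one (by omega)]
      decide
    · rw [if_neg k0, if_neg k1] at hp
      rw [if_neg (by simp [Fin.ext_iff, hp]; omega), if_neg (by omega),
        cast2_zero (by omega), add_zero]
  by_cases l1 : l = 1
  · subst l1
    rw [eVec_one_apply]
    by_cases k0 : k = 0
    · subst k0
      rw [if_pos rfl] at hp
      rw [if_neg (by omega), hp, cast2_zero (by omega)]
    by_cases k1 : k = 1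
    · subst k1
      rw [if_neg (by omega), if_pos rfl] at hp
      rw [if_pos rfl, hp, cast2_one (by omega)]
    · rw [if_neg k0, if_neg k1] at hp
      rw [if_neg (by omega), hp, cast2_zero (by omega)]
  · have h2l : 2 ≤ l := by omega
    rw [eVec_eq_ind4 hn8 h2 h2l hl, ind4_apply]
    by_cases k0 : k = 0
    · subst k0
      rw [if_pos rfl] at hp
      rw [if_neg (by simp [Fin.ext_iff, hp]; omega), if_neg (by omega)]
    by_cases k1 : k = 1
    · subst k1
      rw [if_neg (by omega), if_pos rfl] at hp
      rw [if_neg (by simp [Fin.ext_iff, hp]; omega), if_neg (by omega)]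
    · rw [if_neg k0, if_neg k1] at hp
      by_cases hlk : l = k
      · subst hlk
        rw [if_pos (Or.inl (by simp [Fin.ext_iff, hp])), if_pos rfl]
      · rw [if_neg (by simp [Fin.ext_iff, hp]; omega), if_neg hlk]

lemma eVec_li {n : ℕ} (hn8 : 8 ≤ n) (h2 : 2 ∣ n) :
    LinearIndependent (ZMod 2) (fun k : Fin (n / 2) => eVec n k.val) := by
  rw [Fintype.linearIndependent_iff]
  intro g hg k
  have hklt : (k : ℕ) < n / 2 := k.isLt
  set p : Fin n := ⟨if (k : ℕ) = 0 then 0 else if (k : ℕ) = 1 then 1 else 2 * (k : ℕ) - 2,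
    by split_ifs <;> omega⟩ with hpdef
  have hx := congrFun hg p
  rw [Finset.sum_apply, Pi.zero_apply] at hx
  have hterm : ∀ l : Fin (n / 2), (g l • eVec n l.val) p = if l = k then g l else 0 := by
    intro l
    rw [Pi.smul_apply, smul_eq_mul, eVec_pivot hn8 h2 hklt l.isLt p rfl]
    by_cases h : (l : ℕ) = (k : ℕ)
    · rw [if_pos h, if_pos (Fin.ext h), mul_one]
    · rw [if_neg h, if_neg (fun hh => h (congrArg Fin.val hh)), mul_zero]
  rw [Finset.sum_congr rfl (fun l _ => hterm l)] at hx
  rwa [Finset.sum_ite_eq' univ k g, if_pos (mem_univ k)] at hx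

/-- The standard dot-product bilinear form on `(ZMod 2)^n`. -/
def dotB (n : ℕ) : LinearMap.BilinForm (ZMod 2) (Fin n → ZMod 2) :=
  LinearMap.mk₂ (ZMod 2) (fun v w => ∑ j, v j * w j)
    (fun a b c => by simp [add_mul, Finset.sum_add_distrib])
    (fun r a b => by simp [Finset.mul_sum, mul_assoc])
    (fun a b c => by simp [mul_add, Finset.sum_add_distrib])
    (fun r a b => by simp [Finset.mul_sum, mul_left_comm])

lemma dotB_apply {n : ℕ} (v w : Fin n → ZMod 2) : dotB n v w = ∑ j, v j * w j := rfl

lemma dotB_nondeg {n : ℕ} : (dotB n).Nondegenerate := by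
  refine ⟨fun v hv => ?_, fun v hv => ?_⟩
  all_goals
    funext j
    have h := hv (Pi.single j 1)
    rw [dotB_apply] at h
    simpa [Pi.single_apply, mul_ite, ite_mul] using h

lemma dotB_refl {n : ℕ} : (dotB n).IsRefl := by
  intro x y h
  rw [dotB_apply] at h ⊢
  rw [dot_comm]
  exact h

theorem Scode_typeII (n : ℕ) (hn : 0 < n) (h8 : n % 8 = 0) :
    (∀ c ∈ Scode n, 4 ∣ wt c) ∧
    (Scode n : Set (Fin n → ZMod 2)) =
      {v : Fin n → ZMod 2 | ∀ c ∈ Scode n, ∑ j, v j * c j = 0} := by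
  have hn8 : 8 ≤ n := by omega
  have h2 : 2 ∣ n := by omega
  have h4m : 4 ∣ n / 2 := by omega
  -- the special 4-point vector `G = {0, 1, n-2, n-1}`
  set G : Fin n → ZMod 2 :=
    ind4 ⟨0, by omega⟩ ⟨1, by omega⟩ ⟨n - 2, by omega⟩ ⟨n - 1, by omega⟩ with hG
  have hge0 : eVec n 0 = eVec n 1 + G := eVec_zero_eq hn8 h2
  -- basic dot products
  have A : ∑ j, eVec n 1 j * eVec n 1 j = 0 := by
    rw [dot_self, wt_e1 h2, cast2_zero (by omega)]
  have B : ∑ j, eVec n 1 j * G j = 0 := dot_e1_W hn8 h2 (k := 1) le_rfl (by omega)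
  have B' : ∑ j, G j * eVec n 1 j = 0 := by rw [dot_comm]; exact B
  have Bk : ∀ k, 2 ≤ k → k < n / 2 → ∑ j, eVec n 1 j * eVec n k j = 0 := by
    intro k h2k hk
    rw [eVec_eq_ind4 hn8 h2 h2k hk]
    exact dot_e1_W hn8 h2 (by omega) hk
  have D : ∑ j, G j * G j = 0 := dot_W_self hn8 h2 (k := 1) le_rfl (by omega)
  have Dk : ∀ k, 2 ≤ k → k < n / 2 → ∑ j, G j * eVec n k j = 0 := by
    intro k h2k hk
    rw [eVec_eq_ind4 hn8 h2 h2k hk]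
    exact dot_W_W hn8 h2 (k := 1) (l := k) le_rfl (by omega) (by omega) hk (by omega)
  -- pairwise dot products of generators
  have hgen : ∀ k < n / 2, ∀ l < n / 2, ∑ j, eVec n k j * eVec n l j = 0 := by
    have expandL : ∀ x : Fin n → ZMod 2, ∑ j, eVec n 0 j * x j
        = (∑ j, eVec n 1 j * x j) + ∑ j, G j * x j := by
      intro x
      rw [hge0]
      simp [Pi.add_apply, add_mul, Finset.sum_add_distrib]
    intro k hk l hl
    by_cases k0 : k = 0
    · subst k0
      rw [expandL]
      by_cases l0 : l = 0
      · subst l0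
        rw [dot_comm (eVec n 1) (eVec n 0), expandL, dot_comm G (eVec n 0), expandL,
          A, B', B, D]
        decide
      by_cases l1 : l = 1
      · subst l1
        rw [A, B']
        decide
      · rw [Bk l (by omega) hl, Dk l (by omega) hl]
        decide
    by_cases k1 : k = 1
    · subst k1
      by_cases l0 : l = 0
      · subst l0
        rw [dot_comm (eVec n 1) (eVec n 0), expandL, A, B']
        decide
      by_cases l1 : l = 1
      · subst l1; exact A
      · exact Bk l (by omega) hl
    · have h2k : 2 ≤ k := by omega
      by_cases l0 : l = 0
      · subst l0
        rw [dot_comm (eVec n k) (eVec n 0), expandL, Bk k h2k hk, Dk k h2k hk]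
        decide
      by_cases l1 : l = 1
      · subst l1
        rw [dot_comm (eVec n k) (eVec n 1)]
        exact Bk k h2k hk
      · have h2l : 2 ≤ l := by omega
        by_cases hkl : k = l
        · subst hkl
          rw [eVec_eq_ind4 hn8 h2 h2k hk]
          exact dot_W_self hn8 h2 (by omega) hk
        · rw [eVec_eq_ind4 hn8 h2 h2k hk, eVec_eq_ind4 hn8 h2 h2l hl]
          exact dot_W_W hn8 h2 (by omega) hk (by omega) hl hkl
  -- orthogonality on the whole code
  have horth : ∀ c ∈ Scode n, ∀ d ∈ Scode n, ∑ j, c j * d j = 0 := by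
    intro c hc d hd
    induction hc, hd using Submodule.span_induction₂ with
    | mem_mem x y hx hy =>
      obtain ⟨k, hk, rfl⟩ := hx
      obtain ⟨l, hl, rfl⟩ := hy
      exact hgen k hk l hl
    | zero_left y hy => simp
    | zero_right x hx => simp
    | add_left x y z hx hy hz hxz hyz =>
      simp only [Pi.add_apply, add_mul, Finset.sum_add_distrib, hxz, hyz, add_zero]
    | add_right x y z hx hy hz hxy hxz =>
      simp only [Pi.add_apply, mul_add, Finset.sum_add_distrib, hxy, hxz, add_zero]
    | smul_left r x y hx hy hxy =>
      have : ∑ j, (r • x) j * y j = r * ∑ j, x j * y j := by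
        simp [Finset.mul_sum, mul_assoc]
      rw [this, hxy, mul_zero]
    | smul_right r x y hx hy hxy =>
      have : ∑ j, x j * (r • y) j = r * ∑ j, x j * y j := by
        simp [Finset.mul_sum, mul_left_comm]
      rw [this, hxy, mul_zero]
  -- part 1: weights
  have hwt : ∀ c ∈ Scode n, 4 ∣ wt c := by
    intro c hc
    induction hc using Submodule.span_induction with
    | mem x hx =>
      obtain ⟨k, hk, rfl⟩ := hx
      have hk' : k < n / 2 := hk
      by_cases k0 : k = 0
      · subst k0
        have hcard := dot_eq_card (eVec n 1) G
        rw [B] at hcard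
        have h2c : 2 ∣ (univ.filter fun j => eVec n 1 j ≠ 0 ∧ G j ≠ 0).card := by
          rwa [eq_comm, ZMod.natCast_eq_zero_iff] at hcard
        have hadd := wt_add_eq (eVec n 1) G
        rw [← hge0] at hadd
        have hw1 : wt (eVec n 1) = n / 2 := wt_e1 h2
        have hwG : wt G = 4 := wt_ind4 (by simp only [ne_eq, Fin.mk.injEq]; omega)
          (by simp only [ne_eq, Fin.mk.injEq]; omega) (by simp only [ne_eq, Fin.mk.injEq]; omega)
          (by simp only [ne_eq, Fin.mk.injEq]; omega) (by simp only [ne_eq, Fin.mk.injEq]; omega)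
          (by simp only [ne_eq, Fin.mk.injEq]; omega)
        omega
      by_cases k1 : k = 1
      · subst k1
        rw [wt_e1 h2]
        exact h4m
      · rw [eVec_eq_ind4 hn8 h2 (by omega) hk']
        rw [wt_ind4 (by simp [Fin.ext_iff]; omega) (by simp [Fin.ext_iff]; omega)
          (by simp [Fin.ext_iff]; omega) (by simp [Fin.ext_iff]; omega)
          (by simp [Fin.ext_iff]; omega) (by simp [Fin.ext_iff]; omega)]
    | zero => simp [wt]
    | add x y hx hy ihx ihy =>
      have hcard := dot_eq_card x y
      rw [horth x hx y hy] at hcard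
      have h2c : 2 ∣ (univ.filter fun j => x j ≠ 0 ∧ y j ≠ 0).card := by
        rwa [eq_comm, ZMod.natCast_eq_zero_iff] at hcard
      have hadd := wt_add_eq x y
      omega
    | smul a x hx ihx =>
      rcases zmod2_cases a with h | h
      · rw [h, zero_smul]
        simp [wt]
      · rw [h, one_smul]
        exact ihx
  refine ⟨hwt, ?_⟩
  -- part 2: self-duality
  have himg : eVec n '' Set.Iio (n / 2) = Set.range (fun k : Fin (n / 2) => eVec n k.val) := by
    ext v
    constructor
    · rintro ⟨k, hk, rfl⟩
      exact ⟨⟨k, hk⟩, rfl⟩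
    · rintro ⟨k, rfl⟩
      exact ⟨k.val, k.isLt, rfl⟩
  have hamb : Module.finrank (ZMod 2) (Fin n → ZMod 2) = n := by
    rw [Module.finrank_pi, Fintype.card_fin]
  have hfr1 : Module.finrank (ZMod 2) (Scode n) = n / 2 := by
    rw [Scode, himg, finrank_span_eq_card (eVec_li hn8 h2), Fintype.card_fin]
  have hfr2 : Module.finrank (ZMod 2) ((dotB n).orthogonal (Scode n)) = n / 2 := by
    rw [LinearMap.BilinForm.finrank_orthogonal dotB_nondeg, hfr1, hamb]
    omega
  have hle : Scode n ≤ (dotB n).orthogonal (Scode n) := by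
    intro x hx
    rw [LinearMap.BilinForm.mem_orthogonal_iff]
    intro y hy
    exact horth y hy x hx
  have heq : Scode n = (dotB n).orthogonal (Scode n) :=
    Submodule.eq_of_le_of_finrank_le hle (by rw [hfr2, hfr1])
  ext v
  simp only [SetLike.mem_coe, Set.mem_setOf_eq]
  constructor
  · intro hv c hc
    exact horth v hv c hc
  · intro hv
    have hmem : v ∈ (dotB n).orthogonal (Scode n) := by
      rw [LinearMap.BilinForm.mem_orthogonal_iff]
      intro c hc
      show (dotB n) c v = 0
      rw [dotB_apply, dot_comm]
      exact hv c hc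
    rw [heq]
    exact hmem
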